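/- Let j(x) = π^{-1} ∫₀^∞ e^{-s} (s² + x²)^{-1} ds for real x ≠ 0. Then x² · j(x) tends to 1/π as |x| → ∞. -/

import Mathlib

open MeasureTheory Real Filter

lemma aux_tendsto_sq :
    Tendsto (fun x : ℝ => x ^ 2) (comap (fun x : ℝ => |x|) atTop) atTop := by
  have h : Tendsto (fun x : ℝ => |x|) (comap (fun x : ℝ => |x|) atTop) atTop :=
    tendsto_comap
  have h2 : Tendsto (fun y : ℝ => y ^ 2) atTop atTop :=
    tendsto_pow_atTop (by norm_num)
  have := h2.comp h
  refine this.congr (fun x => ?_)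
  simp [sq_abs]

lemma aux_integral_tendsto :
    Tendsto (fun x : ℝ => ∫ s in Set.Ioi (0 : ℝ),
        x ^ 2 * (Real.exp (-s) * (s ^ 2 + x ^ 2)⁻¹))
      (comap (fun x : ℝ => |x|) atTop) (nhds 1) := by
  have key : Tendsto (fun x : ℝ => ∫ s in Set.Ioi (0 : ℝ),
        x ^ 2 * (Real.exp (-s) * (s ^ 2 + x ^ 2)⁻¹))
      (comap (fun x : ℝ => |x|) atTop)
      (nhds (∫ s in Set.Ioi (0 : ℝ), Real.exp (-s))) := by
    apply MeasureTheory.tendsto_integral_filter_of_dominated_convergence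
      (fun s => Real.exp (-s))
    · refine Eventually.of_forall (fun x => ?_)
      apply Measurable.aestronglyMeasurable
      exact measurable_const.mul ((measurable_exp.comp measurable_neg).mul
        (((measurable_id.pow_const 2).add_const _).inv))
    · refine Eventually.of_forall (fun x => ?_)
      refine (ae_restrict_iff' measurableSet_Ioi).mpr (Eventually.of_forall fun s hs => ?_)
      have hs0 : (0 : ℝ) < s := hs
      have hden : (0 : ℝ) < s ^ 2 + x ^ 2 := by positivity
      rw [Real.norm_eq_abs, abs_of_nonneg (by positivity)]
      rw [← mul_assoc, mul_comm (x ^ 2), mul_assoc]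
      have : x ^ 2 * (s ^ 2 + x ^ 2)⁻¹ ≤ 1 := by
        rw [mul_inv_le_iff₀ hden, one_mul]
        nlinarith
      nlinarith [Real.exp_pos (-s)]
    · exact (by simpa using exp_neg_integrableOn_Ioi (0 : ℝ) (by norm_num : (0:ℝ) < 1) :
        IntegrableOn (fun s : ℝ => Real.exp (-s)) (Set.Ioi 0))
    · refine (ae_restrict_iff' measurableSet_Ioi).mpr (Eventually.of_forall fun s hs => ?_)
      have hs0 : (0 : ℝ) < s := hs
      have htend : Tendsto (fun x : ℝ => (s ^ 2 + x ^ 2)⁻¹)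
          (comap (fun x : ℝ => |x|) atTop) (nhds 0) := by
        apply Tendsto.inv_tendsto_atTop
        exact tendsto_atTop_add_const_left _ _ aux_tendsto_sq
      have : Tendsto (fun x : ℝ => Real.exp (-s) * (1 - s ^ 2 * (s ^ 2 + x ^ 2)⁻¹))
          (comap (fun x : ℝ => |x|) atTop) (nhds (Real.exp (-s) * (1 - s ^ 2 * 0))) := by
        exact tendsto_const_nhds.mul
          (tendsto_const_nhds.sub (tendsto_const_nhds.mul htend))
      simp only [mul_zero, sub_zero, mul_one] at this
      refine this.congr fun x => ?_
      have hden : (0 : ℝ) < s ^ 2 + x ^ 2 := by positivity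
      field_simp
      ring
  have : (∫ s in Set.Ioi (0 : ℝ), Real.exp (-s)) = 1 := by
    rw [integral_exp_neg_Ioi]; simp
  rwa [this] at key

/-- Large-space asymptotics of the Lévy density of the geometric 1-stable process in
dimension 1: `x² j(x) → 1/π` as `|x| → ∞`, where
`j(x) = π⁻¹ ∫₀^∞ e^{-s} (s² + x²)⁻¹ ds`. -/
theorem geometric_one_stable_levy_density_large_space :
    Tendsto (fun x : ℝ =>
        x ^ 2 * (π⁻¹ * ∫ s in Set.Ioi (0 : ℝ), Real.exp (-s) * (s ^ 2 + x ^ 2)⁻¹))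
      (comap (fun x : ℝ => |x|) atTop) (nhds (1 / π)) := by
  have h : Tendsto (fun x : ℝ => π⁻¹ * ∫ s in Set.Ioi (0 : ℝ),
      x ^ 2 * (Real.exp (-s) * (s ^ 2 + x ^ 2)⁻¹))
      (comap (fun x : ℝ => |x|) atTop) (nhds (1 / π)) := by
    simpa [one_div] using aux_integral_tendsto.const_mul (π⁻¹)
  refine h.congr fun x => ?_
  rw [integral_const_mul]
  ring
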